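/- For the superposition trawl, for every t ≥ 0 the overlap area equals leb(A_t ∩ A) = (1 − b)·∫_0^∞ (e^{−tλ}/λ) π(dλ). -/

import Mathlib

open MeasureTheory Set Filter

/-- For the superposition trawl, for every `t ≥ 0` the overlap area
equals `leb(A_t ∩ A) = (1 − b)·∫ (e^{−tλ}/λ) π(dλ)`. -/
theorem superposition_trawl_overlap_area
    (b : ℝ) (hb : b ∈ Set.Ico (0:ℝ) 1)
    (π : Measure ℝ) [IsProbabilityMeasure π]
    (hπ0 : π (Set.Iic 0) = 0)
    (hπint : MeasureTheory.Integrable (fun l => l⁻¹) π)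
    (d : ℝ → ℝ)
    (hd : ∀ s : ℝ, d s = b + (1 - b) * ∫ l, Real.exp (l * s) ∂π)
    (A : ℝ → Set (ℝ × ℝ))
    (hA : ∀ t, A t = {p : ℝ × ℝ | p.2 ≤ t ∧ b ≤ p.1 ∧ p.1 < d (p.2 - t)}) :
    ∀ t ≥ (0:ℝ),
      volume (A t ∩ A 0) = ENNReal.ofReal ((1 - b) * ∫ l, Real.exp (-t * l) / l ∂π) := by
  intro t ht
  have hb0 : (0:ℝ) ≤ b := hb.1
  have hb1 : b < 1 := hb.2
  have h1b : (0:ℝ) ≤ 1 - b := by linarith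
  have hpos : ∀ᵐ l ∂π, 0 < l := by
    rw [ae_iff]
    have : {l : ℝ | ¬ 0 < l} = Set.Iic 0 := by ext l; simp [not_lt]
    rw [this]; exact hπ0
  set g : ℝ → ℝ := fun s => ∫ l, Real.exp (l * s) ∂π with hgdef
  have gint : ∀ s : ℝ, s ≤ 0 → Integrable (fun l => Real.exp (l * s)) π := by
    intro s hs
    refine Integrable.mono' (integrable_const 1)
      ((Real.measurable_exp.comp (measurable_id.mul measurable_const)).aestronglyMeasurable) ?_
    filter_upwards [hpos] with l hl
    rw [Real.norm_eq_abs, abs_of_nonneg (Real.exp_pos _).le, Real.exp_le_one_iff]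
    exact mul_nonpos_of_nonneg_of_nonpos hl.le hs
  have gmono : ∀ s₁ s₂ : ℝ, s₁ ≤ s₂ → s₂ ≤ 0 → g s₁ ≤ g s₂ := by
    intro s₁ s₂ h12 h2
    refine integral_mono_ae (gint s₁ (h12.trans h2)) (gint s₂ h2) ?_
    filter_upwards [hpos] with l hl
    exact Real.exp_le_exp.2 (mul_le_mul_of_nonneg_left h12 hl.le)
  have gnonneg : ∀ s : ℝ, 0 ≤ g s := fun s => integral_nonneg fun l => (Real.exp_pos _).le
  set h : ℝ → ℝ := fun s => b + (1 - b) * g (min (s - t) 0) with hhdef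
  have hmono : Monotone h := by
    intro s₁ s₂ hs
    have hmin : min (s₁ - t) 0 ≤ min (s₂ - t) 0 := min_le_min (by linarith) le_rfl
    have := gmono _ _ hmin (min_le_right _ _)
    have := mul_le_mul_of_nonneg_left this h1b
    simpa [hhdef] using by linarith
  have hmeas : Measurable h := hmono.measurable
  -- identify the intersection
  have hset : A t ∩ A 0 = {p : ℝ × ℝ | p.2 ≤ 0 ∧ b ≤ p.1 ∧ p.1 < h p.2} := by
    ext p
    simp only [hA, Set.mem_inter_iff, Set.mem_setOf_eq, sub_zero]
    constructor
    · rintro ⟨⟨_, hx1, hx2⟩, hs0, _, _⟩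
      refine ⟨hs0, hx1, ?_⟩
      have hmin : min (p.2 - t) 0 = p.2 - t := min_eq_left (by linarith)
      rw [hhdef]
      simp only [hmin]
      rw [hd] at hx2
      exact hx2
    · rintro ⟨hs0, hx1, hlt⟩
      have hmin : min (p.2 - t) 0 = p.2 - t := min_eq_left (by linarith)
      have hdt : d (p.2 - t) = h p.2 := by
        rw [hd, hhdef]; simp only [hmin]; rfl
      have hdd : d (p.2 - t) ≤ d p.2 := by
        rw [hd, hd]
        have := gmono (p.2 - t) p.2 (by linarith) hs0
        have := mul_le_mul_of_nonneg_left this h1b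
        linarith
      exact ⟨⟨by linarith, hx1, by rw [hdt]; exact hlt⟩, hs0, hx1,
        lt_of_lt_of_le (by rw [hdt]; exact hlt) hdd⟩
  rw [hset]
  set S : Set (ℝ × ℝ) := {p : ℝ × ℝ | p.2 ≤ 0 ∧ b ≤ p.1 ∧ p.1 < h p.2} with hSdef
  have hSmeas : MeasurableSet S := by
    have h1 : MeasurableSet {p : ℝ × ℝ | p.2 ≤ 0} :=
      measurable_snd measurableSet_Iic
    have h2 : MeasurableSet {p : ℝ × ℝ | b ≤ p.1} :=
      measurable_fst measurableSet_Ici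
    have h3 : MeasurableSet {p : ℝ × ℝ | p.1 < h p.2} :=
      measurableSet_lt measurable_fst (hmeas.comp measurable_snd)
    have : S = {p : ℝ × ℝ | p.2 ≤ 0} ∩ ({p : ℝ × ℝ | b ≤ p.1} ∩ {p : ℝ × ℝ | p.1 < h p.2}) := by
      ext p; simp [hSdef, and_assoc]
    rw [this]; exact h1.inter (h2.inter h3)
  rw [Measure.volume_eq_prod, Measure.prod_apply_symm hSmeas]
  have slice : ∀ s : ℝ, volume ((fun x => (x, s)) ⁻¹' S)
      = Set.indicator (Set.Iic 0) (fun s => ENNReal.ofReal (h s - b)) s := by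
    intro s
    by_cases hs : s ≤ 0
    · have : (fun x => (x, s)) ⁻¹' S = Set.Ico b (h s) := by
        ext x; simp [hSdef, hs, Set.mem_Ico]
      rw [this, Real.volume_Ico, Set.indicator_of_mem (by exact hs : s ∈ Set.Iic 0)]
    · have : (fun x => (x, s)) ⁻¹' S = ∅ := by
        ext x; simp [hSdef, hs]
      rw [this, Set.indicator_of_notMem (by simpa using hs)]
      simp
  calc ∫⁻ s, volume ((fun x => (x, s)) ⁻¹' S)
      = ∫⁻ s, Set.indicator (Set.Iic 0) (fun s => ENNReal.ofReal (h s - b)) s :=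
        lintegral_congr slice
    _ = ∫⁻ s in Set.Iic 0, ENNReal.ofReal (h s - b) :=
        lintegral_indicator measurableSet_Iic _
    _ = ∫⁻ s in Set.Iic 0, ENNReal.ofReal (1 - b) * ENNReal.ofReal (g (s - t)) := by
        refine setLIntegral_congr_fun measurableSet_Iic (fun s hs => ?_)
        have hmin : min (s - t) 0 = s - t := min_eq_left (by simp at hs; linarith)
        rw [hhdef]
        simp only [hmin, add_sub_cancel_left]
        rw [ENNReal.ofReal_mul h1b]
    _ = ENNReal.ofReal (1 - b) * ∫⁻ s in Set.Iic 0, ENNReal.ofReal (g (s - t)) :=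
        lintegral_const_mul' _ _ ENNReal.ofReal_ne_top
    _ = ENNReal.ofReal (1 - b) *
          ∫⁻ s in Set.Iic 0, ∫⁻ l, ENNReal.ofReal (Real.exp (l * (s - t))) ∂π := by
        congr 1
        refine setLIntegral_congr_fun measurableSet_Iic (fun s hs => ?_)
        have hst : s - t ≤ 0 := by simp at hs; linarith
        rw [hgdef]
        exact MeasureTheory.ofReal_integral_eq_lintegral_ofReal (gint _ hst)
          (ae_of_all _ fun l => (Real.exp_pos _).le)
    _ = ENNReal.ofReal (1 - b) *
          ∫⁻ l, (∫⁻ s in Set.Iic 0, ENNReal.ofReal (Real.exp (l * (s - t)))) ∂π := by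
        congr 1
        refine lintegral_lintegral_swap ?_
        exact ((Real.measurable_exp.comp
          (measurable_snd.mul (measurable_fst.sub measurable_const))).ennreal_ofReal).aemeasurable
    _ = ENNReal.ofReal (1 - b) * ∫⁻ l, ENNReal.ofReal (Real.exp (-t * l) / l) ∂π := by
        congr 1
        refine lintegral_congr_ae ?_
        filter_upwards [hpos] with l hl
        -- integrability of s ↦ exp (l * s) on Iic 0
        have hembed : MeasurableEmbedding fun x : ℝ => -x :=
          (Homeomorph.neg ℝ).isClosedEmbedding.measurableEmbedding
        have hint : IntegrableOn (fun s => Real.exp (l * s)) (Set.Iic 0) := by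
          have h1 : IntegrableOn (fun x : ℝ => Real.exp (-l * x)) (Set.Ioi 0) :=
            exp_neg_integrableOn_Ioi 0 hl
          have h2 : IntegrableOn (fun x : ℝ => Real.exp (-l * x)) (Set.Ici 0) :=
            (integrableOn_Ici_iff_integrableOn_Ioi).mpr h1
          rw [IntegrableOn, ← Measure.map_neg_eq_self (volume : Measure ℝ),
            Measure.restrict_map hembed.measurable measurableSet_Iic,
            hembed.integrable_map_iff]
          have hpre : (fun x : ℝ => -x) ⁻¹' Set.Iic 0 = Set.Ici 0 := by
            ext x; simp
          rw [hpre]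
          refine h2.congr_fun (fun x _ => ?_) measurableSet_Ici
          simp [Function.comp]
        have hval : ∫ s in Set.Iic 0, Real.exp (l * s) = l⁻¹ := by
          have h1 : ∫ x in Set.Ioi (0:ℝ), Real.exp (l * (-x)) = ∫ x in Set.Iic (0:ℝ), Real.exp (l * x) := by
            simpa using integral_comp_neg_Ioi (0:ℝ) (fun x => Real.exp (l * x))
          have h2 : ∫ x in Set.Ioi (0:ℝ), Real.exp (l * (-x))
              = ∫ x in Set.Ioi (0:ℝ), Real.exp (-(l * x)) := by
            congr 1; ext x; ring_nf
          have h3 : (∫ x in Set.Ioi (0:ℝ), Real.exp (-(l * x)))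
              = l⁻¹ • ∫ x in Set.Ioi (l * 0), Real.exp (-x) :=
            integral_comp_mul_left_Ioi (fun x => Real.exp (-x)) 0 hl
          rw [← h1, h2, h3]
          simp only [mul_zero, integral_exp_neg_Ioi_zero, smul_eq_mul, mul_one]
        -- now compute the inner lintegral
        have hint' : IntegrableOn (fun s => Real.exp (l * (s - t))) (Set.Iic 0) := by
          have := (hint.mul_const (Real.exp (-(t * l))))
          refine IntegrableOn.congr_fun this (fun s _ => ?_) measurableSet_Iic
          rw [← Real.exp_add]; ring_nf
        have hval' : ∫ s in Set.Iic 0, Real.exp (l * (s - t)) = Real.exp (-t * l) / l := by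
          have heq : ∀ s : ℝ, Real.exp (l * (s - t)) = Real.exp (l * s) * Real.exp (-(t * l)) := by
            intro s; rw [← Real.exp_add]; ring_nf
          rw [show (fun s => Real.exp (l * (s - t)))
              = fun s => Real.exp (l * s) * Real.exp (-(t * l)) from funext heq]
          rw [integral_mul_const, hval]
          rw [div_eq_mul_inv]
          ring_nf
        rw [← MeasureTheory.ofReal_integral_eq_lintegral_ofReal hint'
          (ae_of_all _ fun s => (Real.exp_pos _).le), hval']
    _ = ENNReal.ofReal ((1 - b) * ∫ l, Real.exp (-t * l) / l ∂π) := by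
        rw [← MeasureTheory.ofReal_integral_eq_lintegral_ofReal, ← ENNReal.ofReal_mul h1b]
        · refine Integrable.mono hπint
            (((Real.measurable_exp.comp (measurable_const.mul measurable_id)).div
              measurable_id).aestronglyMeasurable) ?_
          filter_upwards [hpos] with l hl
          rw [Real.norm_eq_abs, Real.norm_eq_abs,
            abs_of_nonneg (by positivity : (0:ℝ) ≤ Real.exp (-t * l) / l),
            abs_of_nonneg (inv_nonneg.2 hl.le)]
          rw [div_le_iff₀ hl, inv_mul_cancel₀ hl.ne']
          exact Real.exp_le_one_iff.2 (by nlinarith)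
        · filter_upwards [hpos] with l hl
          positivity
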